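/- For any prime power q and positive integer n, (1 − 1/(2(q−1)q^{⌊n/2⌋}))·∑_{i=1}^n 1/i ≤ |∑_{i=1}^n π'_q(i)·log(1 − 1/q^i)| ≤ (1 + 1/(2(q−1)q^{⌊n/2⌋}))·∑_{i=1}^n 1/i. -/

import Mathlib

open Polynomial Finset UniqueFactorizationMonoid

/-- The number of monic irreducible polynomials of degree `n` over a finite field `F`. -/
noncomputable def numIrred (F : Type*) [Field F] [Fintype F] (n : ℕ) : ℕ :=
  Nat.card {f : F[X] // f.Monic ∧ Irreducible f ∧ f.natDegree = n}

lemma nat_pow_sub_one_dvd_iff {q d m : ℕ} (hq : 2 ≤ q) (hd : 0 < d) :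
    q ^ d - 1 ∣ q ^ m - 1 ↔ d ∣ m := by
  constructor
  · intro h
    rcases Nat.eq_zero_or_pos m with rfl | hm
    · exact Nat.dvd_zero d
    -- write m = d * (m / d) + m % d
    have hmod : m % d < d := Nat.mod_lt _ hd
    have hsplit : q ^ m = q ^ (d * (m / d)) * q ^ (m % d) := by
      rw [← pow_add, Nat.div_add_mod]
    have h1 : q ^ d - 1 ∣ q ^ (d * (m / d)) - 1 := by
      rw [pow_mul]
      simpa using Nat.sub_dvd_pow_sub_pow (q ^ d) 1 (m / d)
    have h2 : q ^ d - 1 ∣ q ^ m - q ^ (m % d) := by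
      have : q ^ m - q ^ (m % d) = (q ^ (d * (m / d)) - 1) * q ^ (m % d) := by
        rw [Nat.sub_mul, one_mul, ← pow_add, Nat.add_comm, Nat.mod_add_div]
      rw [this]
      exact h1.mul_right _
    have h3 : q ^ d - 1 ∣ q ^ (m % d) - 1 := by
      have hle : q ^ (m % d) ≤ q ^ m := Nat.pow_le_pow_right (by omega) (Nat.mod_le _ _)
      have := Nat.dvd_sub h h2
      have heq : q ^ m - 1 - (q ^ m - q ^ (m % d)) = q ^ (m % d) - 1 := by
        have h1' : 1 ≤ q ^ (m % d) := Nat.one_le_pow _ _ (by omega)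
        omega
      rwa [heq] at this
    have hlt : q ^ (m % d) - 1 < q ^ d - 1 := by
      have : q ^ (m % d) < q ^ d := Nat.pow_lt_pow_right (by omega) hmod
      have h1' : 1 ≤ q ^ (m % d) := Nat.one_le_pow _ _ (by omega)
      omega
    have h0 : q ^ (m % d) - 1 = 0 := by
      by_contra h0
      exact absurd (Nat.le_of_dvd (Nat.pos_of_ne_zero h0) h3) (by omega)
    have : m % d = 0 := by
      by_contra hr
      have : q ^ 1 ≤ q ^ (m % d) := Nat.pow_le_pow_right (by omega) (by omega)
      simp at this; omega
    exact Nat.dvd_of_mod_eq_zero this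
  · rintro ⟨k, rfl⟩
    rw [pow_mul]
    simpa using Nat.sub_dvd_pow_sub_pow (q ^ d) 1 k

section DvdIff
variable {F : Type*} [Field F] [Fintype F]

lemma irred_dvd_iff (f : F[X]) (hmo : f.Monic) (hirr : Irreducible f) {m : ℕ} (hm : 1 ≤ m) :
    f ∣ X ^ (Fintype.card F) ^ m - X ↔ f.natDegree ∣ m := by
  classical
  set q := Fintype.card F with hq
  have hq2 : 2 ≤ q := Fintype.one_lt_card
  have hf0 : f ≠ 0 := hmo.ne_zero
  haveI : Fact (Irreducible f) := ⟨hirr⟩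
  set A := AdjoinRoot f
  haveI : Module.Finite F A := (AdjoinRoot.powerBasis hf0).finite
  haveI : Finite A := Module.finite_of_finite F
  letI : Fintype A := Fintype.ofFinite A
  have hd : Module.finrank F A = f.natDegree := (AdjoinRoot.powerBasis hf0).finrank
  have hcardA : Fintype.card A = q ^ f.natDegree := by
    rw [Module.card_eq_pow_finrank (K := F) (V := A), hd]
  have hminpoly : minpoly F (AdjoinRoot.root f) = f := by
    rw [AdjoinRoot.minpoly_root hf0, hmo.leadingCoeff, inv_one, map_one, mul_one]
  constructor
  · intro hdvd
    -- root satisfies x ^ q ^ m = x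
    have hroot : (AdjoinRoot.root f) ^ q ^ m = AdjoinRoot.root f := by
      obtain ⟨g, hg⟩ := hdvd
      have h0 : aeval (AdjoinRoot.root f) (X ^ q ^ m - X : F[X]) = 0 := by
        rw [hg, map_mul, AdjoinRoot.aeval_eq, AdjoinRoot.mk_self, zero_mul]
      simpa [sub_eq_zero] using h0
    -- all elements satisfy x ^ q ^ m = x
    obtain ⟨p, hp⟩ := CharP.exists F
    haveI : CharP F p := hp
    obtain ⟨e, hpp, hcard⟩ := FiniteField.card F p
    haveI : Fact p.Prime := ⟨hpp⟩
    haveI : CharP A p := charP_of_injective_algebraMap (algebraMap F A).injective p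
    have hQ : q ^ m = p ^ ((e : ℕ) * m) := by rw [hq, hcard, ← pow_mul]
    have hall : ∀ y : A, y ^ q ^ m = y := by
      intro y
      have hy : y ∈ Algebra.adjoin F {AdjoinRoot.root f} := by
        rw [AdjoinRoot.adjoinRoot_eq_top]; trivial
      induction hy using Algebra.adjoin_induction with
      | mem x hx => rw [Set.mem_singleton_iff.1 hx]; exact hroot
      | algebraMap r => rw [← map_pow]; congr 1; exact FiniteField.pow_card_pow m r
      | add x y hx hy ihx ihy => rw [hQ] at ihx ihy ⊢; rw [add_pow_char_pow, ihx, ihy]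
      | mul x y hx hy ihx ihy => rw [mul_pow, ihx, ihy]
    -- take a generator of the unit group
    obtain ⟨g, hg⟩ := IsCyclic.exists_generator (α := Aˣ)
    have hord : orderOf g = q ^ f.natDegree - 1 := by
      rw [orderOf_eq_card_of_forall_mem_zpowers hg, Nat.card_eq_fintype_card,
        Fintype.card_units, hcardA]
    have hgpow : g ^ (q ^ m - 1) = 1 := by
      have h1 : (g : A) ^ q ^ m = (g : A) := hall g
      have hq1 : 1 ≤ q ^ m := Nat.one_le_pow _ _ (by omega)
      have : g ^ q ^ m = g := Units.ext (by rwa [Units.val_pow_eq_pow_val])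
      have h2 : g ^ (q ^ m - 1) * g = g := by
        rw [← pow_succ, Nat.sub_add_cancel hq1, this]
      calc g ^ (q ^ m - 1) = g ^ (q ^ m - 1) * g * g⁻¹ := by rw [mul_assoc, mul_inv_cancel, mul_one]
        _ = 1 := by rw [h2, mul_inv_cancel]
    have hdvd1 : q ^ f.natDegree - 1 ∣ q ^ m - 1 := by
      rw [← hord]; exact orderOf_dvd_of_pow_eq_one hgpow
    exact (nat_pow_sub_one_dvd_iff hq2 hirr.natDegree_pos).1 hdvd1
  · intro hdvd
    have hroot : (AdjoinRoot.root f) ^ q ^ m = AdjoinRoot.root f := by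
      obtain ⟨k, hk⟩ := hdvd
      have : q ^ m = (Fintype.card A) ^ k := by rw [hcardA, ← pow_mul, ← hk]
      rw [this]
      exact FiniteField.pow_card_pow k _
    have h0 : aeval (AdjoinRoot.root f) (X ^ q ^ m - X : F[X]) = 0 := by
      simp [hroot]
    have := minpoly.dvd F (AdjoinRoot.root f) h0
    rwa [hminpoly] at this

end DvdIff

section Gauss
variable (F : Type*) [Field F] [Fintype F]

lemma gauss_count {m : ℕ} (hm : 1 ≤ m) :
    ∑ d ∈ m.divisors, d * numIrred F d = (Fintype.card F) ^ m := by
  classical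
  set q := Fintype.card F with hq
  have hq2 : 2 ≤ q := Fintype.one_lt_card
  have hqm : 1 < q ^ m := Nat.one_lt_pow (by omega) (by omega)
  set P : F[X] := X ^ q ^ m - X with hP
  have hP0 : P ≠ 0 := FiniteField.X_pow_card_pow_sub_X_ne_zero F (by omega) hq2
  have hPmo : P.Monic := monic_X_pow_sub (by rw [degree_X]; exact_mod_cast hqm)
  have hPdeg : P.natDegree = q ^ m :=
    FiniteField.X_pow_card_pow_sub_X_natDegree_eq F (by omega) hq2
  have hPsep : P.Separable := by
    obtain ⟨p, hp⟩ := CharP.exists F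
    haveI : CharP F p := hp
    obtain ⟨e, hpp, hcard⟩ := FiniteField.card F p
    exact galois_poly_separable p (q ^ m) (by rw [hq, hcard, ← pow_mul]; exact dvd_pow_self p (by positivity))
  have hnodup : (normalizedFactors P).Nodup :=
    (squarefree_iff_nodup_normalizedFactors hP0).1 hPsep.squarefree
  -- membership characterization
  have hmem : ∀ g : F[X], g ∈ normalizedFactors P ↔ g.Monic ∧ Irreducible g ∧ g ∣ P := by
    intro g
    constructor
    · intro hg
      have hgi := irreducible_of_normalized_factor g hg
      have hgm : g.Monic := by
        have := normalize_normalized_factor g hg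
        rw [← this]
        exact monic_normalize hgi.ne_zero
      exact ⟨hgm, hgi, dvd_of_mem_normalizedFactors hg⟩
    · rintro ⟨hgm, hgi, hgd⟩
      obtain ⟨g', hg', hassoc⟩ := exists_mem_normalizedFactors_of_dvd hP0 hgi hgd
      have hg'm : g'.Monic := by
        have := normalize_normalized_factor g' hg'
        rw [← this]
        exact monic_normalize (irreducible_of_normalized_factor g' hg').ne_zero
      rwa [eq_of_monic_of_associated hgm hg'm hassoc]
  set T : Finset F[X] := ⟨normalizedFactors P, hnodup⟩ with hT
  have hTmem : ∀ g, g ∈ T ↔ g.Monic ∧ Irreducible g ∧ g ∣ P := hmem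
  have hfacmo : ∀ g ∈ normalizedFactors P, Monic g := fun g hg => ((hmem g).1 hg).1
  -- degree sum
  have hdegsum : ∑ g ∈ T, g.natDegree = q ^ m := by
    have hprodmo : (normalizedFactors P).prod.Monic := by
      have := monic_multiset_prod_of_monic (normalizedFactors P) id (fun g hg => hfacmo g hg)
      simpa using this
    have h1 : (normalizedFactors P).prod = P :=
      eq_of_monic_of_associated hprodmo hPmo (prod_normalizedFactors hP0)
    have h2 := natDegree_multiset_prod_of_monic (normalizedFactors P) hfacmo
    rw [h1] at h2
    rw [← hPdeg, h2]
    rfl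
  -- fiberwise
  have hmaps : ∀ g ∈ T, g.natDegree ∈ m.divisors := by
    intro g hg
    obtain ⟨hgm, hgi, hgd⟩ := (hTmem g).1 hg
    rw [Nat.mem_divisors]
    exact ⟨(irred_dvd_iff g hgm hgi hm).1 hgd, by omega⟩
  have hfib := Finset.sum_fiberwise_of_maps_to hmaps (fun g => g.natDegree)
  -- each fiber has cardinality numIrred F d
  have hcard : ∀ d ∈ m.divisors, (T.filter (fun g => g.natDegree = d)).card = numIrred F d := by
    intro d hd
    obtain ⟨hddvd, -⟩ := Nat.mem_divisors.1 hd
    have hset : {f : F[X] | f.Monic ∧ Irreducible f ∧ f.natDegree = d}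
        = ↑(T.filter (fun g => g.natDegree = d)) := by
      ext g
      simp only [Set.mem_setOf_eq, Finset.coe_filter, Finset.mem_filter, hTmem]
      constructor
      · rintro ⟨hgm, hgi, hgdeg⟩
        exact ⟨⟨hgm, hgi, (irred_dvd_iff g hgm hgi hm).2 (hgdeg ▸ hddvd)⟩, hgdeg⟩
      · rintro ⟨⟨hgm, hgi, -⟩, hgdeg⟩
        exact ⟨hgm, hgi, hgdeg⟩
    have hnum : numIrred F d = ({f : F[X] | f.Monic ∧ Irreducible f ∧ f.natDegree = d}).ncard :=
      Nat.card_coe_set_eq _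
    rw [hnum, hset, Set.ncard_coe_finset]
  calc ∑ d ∈ m.divisors, d * numIrred F d
      = ∑ d ∈ m.divisors, ∑ g ∈ T.filter (fun g => g.natDegree = d), g.natDegree := by
        refine Finset.sum_congr rfl fun d hd => ?_
        rw [Finset.sum_congr rfl (fun g hg => (Finset.mem_filter.1 hg).2),
          Finset.sum_const, smul_eq_mul, hcard d hd, mul_comm]
    _ = ∑ g ∈ T, g.natDegree := hfib
    _ = q ^ m := hdegsum

end Gauss

lemma nat_key_ineq {n i : ℕ} (h1 : 1 ≤ i) (h2 : i ≤ n) : n / 2 + i + 1 ≤ i * (n / i + 1) := by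
  have hu : 1 ≤ n / i := (Nat.one_le_div_iff (by omega)).2 h2
  have key : n < i * (n / i) + i := by
    have := Nat.lt_mul_div_succ n (show 0 < i by omega)
    nlinarith [this]
  have e : i * (n / i + 1) = i * (n / i) + i := by ring
  have h2i : 2 * i ≤ i * (n / i + 1) := by
    calc 2 * i = i * 2 := by ring
    _ ≤ i * (n / i + 1) := Nat.mul_le_mul_left i (by omega)
  rcases le_or_gt i (n - n / 2) with hc | hc
  · omega
  · omega

lemma tail_bound_real {Q : ℝ} (hQ : 1 < Q) {i K b e : ℕ} (hi : 1 ≤ i)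
    (hK : 1 ≤ K) (he : e = i * (K + 1)) (hexp : b + i + 1 ≤ e) {Nr : ℝ} (hN0 : 0 ≤ Nr)
    (hNle : (i : ℝ) * Nr ≤ Q ^ i) {τ : ℝ} (hτ0 : 0 ≤ τ)
    (hτ : τ ≤ (Q ^ e)⁻¹ / ((K : ℝ) + 1) * (1 - (Q ^ i)⁻¹)⁻¹) :
    Nr * τ ≤ 1 / (2 * (Q - 1) * Q ^ b) * (1 / (i : ℝ)) := by
  have hQ0 : (0 : ℝ) < Q := by linarith
  have hi0 : (0 : ℝ) < (i : ℝ) := by exact_mod_cast Nat.pos_of_ne_zero (by omega)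
  have hQi1 : (1 : ℝ) < Q ^ i := one_lt_pow₀ hQ (by omega)
  have hQe0 : (0 : ℝ) < Q ^ e := by positivity
  have hx1 : (Q ^ i)⁻¹ < 1 := inv_lt_one_of_one_lt₀ hQi1
  have hB0 : (0 : ℝ) ≤ (Q ^ e)⁻¹ / ((K : ℝ) + 1) * (1 - (Q ^ i)⁻¹)⁻¹ := by
    have : (0:ℝ) < 1 - (Q ^ i)⁻¹ := by linarith
    positivity
  have h1 : Nr * τ ≤ (Q ^ i / i) * ((Q ^ e)⁻¹ / ((K : ℝ) + 1) * (1 - (Q ^ i)⁻¹)⁻¹) := by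
    have hNr : Nr ≤ Q ^ i / i := by rw [le_div_iff₀ hi0]; linarith [hNle]
    calc Nr * τ ≤ Nr * ((Q ^ e)⁻¹ / ((K : ℝ) + 1) * (1 - (Q ^ i)⁻¹)⁻¹) :=
          mul_le_mul_of_nonneg_left hτ hN0
      _ ≤ (Q ^ i / i) * ((Q ^ e)⁻¹ / ((K : ℝ) + 1) * (1 - (Q ^ i)⁻¹)⁻¹) :=
          mul_le_mul_of_nonneg_right hNr hB0
  have heq : (Q ^ i / i) * ((Q ^ e)⁻¹ / ((K : ℝ) + 1) * (1 - (Q ^ i)⁻¹)⁻¹)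
      = Q ^ i * Q ^ i / ((i : ℝ) * ((K : ℝ) + 1) * Q ^ e * (Q ^ i - 1)) := by
    have h2 : (1 - (Q ^ i)⁻¹) = (Q ^ i - 1) / Q ^ i := by
      field_simp
    rw [h2]
    have h3 : Q ^ i - 1 ≠ 0 := by linarith
    have h4 : ((K : ℝ) + 1) ≠ 0 := by positivity
    field_simp
  -- key inequality
  have hQm1 : (0 : ℝ) < Q - 1 := by linarith
  have hsub : (Q - 1) * Q ^ (i - 1) ≤ Q ^ i - 1 := by
    have h5 : Q * Q ^ (i - 1) = Q ^ i := by
      rw [← pow_succ']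
      congr 1
      omega
    have h6 : (1:ℝ) ≤ Q ^ (i - 1) := one_le_pow₀ hQ.le
    nlinarith
  have hexp2 : b + 2 * i ≤ e + (i - 1) := by omega
  have hpow : Q ^ (b + 2 * i) ≤ Q ^ (e + (i - 1)) := pow_le_pow_right₀ hQ.le hexp2
  have hK2 : (2 : ℝ) ≤ (K : ℝ) + 1 := by
    have : (1:ℝ) ≤ (K:ℝ) := by exact_mod_cast hK
    linarith
  have key : 2 * (Q - 1) * Q ^ b * (Q ^ i * Q ^ i)
      ≤ ((K : ℝ) + 1) * (Q ^ e * (Q ^ i - 1)) := by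
    have t1 : 2 * (Q - 1) * Q ^ b * (Q ^ i * Q ^ i) = 2 * ((Q - 1) * Q ^ (b + 2 * i)) := by
      rw [pow_add, pow_mul]; ring
    have t2 : (Q - 1) * Q ^ (b + 2 * i) ≤ (Q - 1) * Q ^ (e + (i - 1)) :=
      mul_le_mul_of_nonneg_left hpow hQm1.le
    have t3 : (Q - 1) * Q ^ (e + (i - 1)) = Q ^ e * ((Q - 1) * Q ^ (i - 1)) := by
      rw [pow_add]; ring
    have t4 : Q ^ e * ((Q - 1) * Q ^ (i - 1)) ≤ Q ^ e * (Q ^ i - 1) :=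
      mul_le_mul_of_nonneg_left hsub hQe0.le
    have t5 : (2:ℝ) * (Q ^ e * (Q ^ i - 1)) ≤ ((K : ℝ) + 1) * (Q ^ e * (Q ^ i - 1)) := by
      apply mul_le_mul_of_nonneg_right hK2
      have : (0:ℝ) < Q ^ i - 1 := by linarith
      positivity
    calc 2 * (Q - 1) * Q ^ b * (Q ^ i * Q ^ i) = 2 * ((Q - 1) * Q ^ (b + 2 * i)) := t1
      _ ≤ 2 * ((Q - 1) * Q ^ (e + (i - 1))) := by linarith
      _ = 2 * (Q ^ e * ((Q - 1) * Q ^ (i - 1))) := by rw [t3]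
      _ ≤ 2 * (Q ^ e * (Q ^ i - 1)) := by linarith
      _ ≤ ((K : ℝ) + 1) * (Q ^ e * (Q ^ i - 1)) := t5
  have hfinal : Q ^ i * Q ^ i / ((i : ℝ) * ((K : ℝ) + 1) * Q ^ e * (Q ^ i - 1))
      ≤ 1 / (2 * (Q - 1) * Q ^ b) * (1 / (i : ℝ)) := by
    have hd1 : (0:ℝ) < (i : ℝ) * ((K : ℝ) + 1) * Q ^ e * (Q ^ i - 1) := by
      have : (0:ℝ) < Q ^ i - 1 := by linarith
      positivity
    have hd2 : (0:ℝ) < 2 * (Q - 1) * Q ^ b * (i : ℝ) := by positivity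
    rw [show (1:ℝ) / (2 * (Q - 1) * Q ^ b) * (1 / (i : ℝ))
        = 1 / (2 * (Q - 1) * Q ^ b * (i:ℝ)) by rw [div_mul_div_comm, one_mul]]
    rw [div_le_div_iff₀ hd1 hd2]
    nlinarith [mul_le_mul_of_nonneg_left key hi0.le]
  linarith [h1, heq ▸ h1, hfinal]

lemma main_reindex (q n : ℕ) (hq2 : 2 ≤ q) (hn : 1 ≤ n) (N : ℕ → ℕ)
    (hg : ∀ m, 1 ≤ m → ∑ d ∈ m.divisors, d * N d = q ^ m) :
    ∑ i ∈ Icc 1 n, (N i : ℝ) * ∑ k ∈ range (n / i), (((q : ℝ) ^ i)⁻¹) ^ (k + 1) / ((k : ℝ) + 1)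
      = ∑ m ∈ Icc 1 n, (1 : ℝ) / m := by
  have hQ0 : (0 : ℝ) < (q : ℝ) := by positivity
  have hganti : ∀ m : ℕ, 1 ≤ m → ∑ p ∈ m.divisorsAntidiagonal, p.1 * N p.1 = q ^ m := by
    intro m hm
    rw [Nat.sum_divisorsAntidiagonal (fun a b => a * N a)]
    exact hg m hm
  have hrhs : ∀ m ∈ Icc 1 n, (1 : ℝ) / m
      = ∑ p ∈ m.divisorsAntidiagonal, ((p.1 * N p.1 : ℕ) : ℝ) / ((m : ℝ) * (q : ℝ) ^ m) := by
    intro m hm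
    rw [mem_Icc] at hm
    rw [← Finset.sum_div, ← Nat.cast_sum, hganti m hm.1]
    rw [Nat.cast_pow]
    rw [div_mul_eq_div_div_swap, div_self (by positivity), one_div]
  rw [Finset.sum_congr rfl hrhs]
  rw [Finset.sum_sigma']
  simp only [Finset.mul_sum]
  rw [Finset.sum_sigma']
  refine Finset.sum_nbij' (fun p => ⟨p.1 * (p.2 + 1), (p.1, p.2 + 1)⟩)
    (fun p => ⟨p.2.1, p.2.2 - 1⟩) ?_ ?_ ?_ ?_ ?_
  · rintro ⟨i, k⟩ hp
    simp only [Finset.mem_sigma, mem_Icc, Finset.mem_range] at hp ⊢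
    obtain ⟨⟨hi1, hin⟩, hk⟩ := hp
    have hik : i * (k + 1) ≤ n := by
      rw [mul_comm]
      exact (Nat.le_div_iff_mul_le (by omega)).1 (by omega)
    refine ⟨⟨Nat.one_le_iff_ne_zero.2 (Nat.mul_ne_zero (by omega) (by omega)), hik⟩, ?_⟩
    rw [Nat.mem_divisorsAntidiagonal]
    exact ⟨rfl, Nat.mul_ne_zero (by omega) (by omega)⟩
  · rintro ⟨m, a, b⟩ hp
    simp only [Finset.mem_sigma, mem_Icc, Nat.mem_divisorsAntidiagonal] at hp
    obtain ⟨⟨hm1, hmn⟩, hab, hm0⟩ := hp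
    simp only [Finset.mem_sigma, mem_Icc, Finset.mem_range]
    have ha1 : 1 ≤ a := by
      rcases Nat.eq_zero_or_pos a with rfl | h
      · simp at hab; omega
      · omega
    have hb1 : 1 ≤ b := by
      rcases Nat.eq_zero_or_pos b with rfl | h
      · simp at hab; omega
      · omega
    refine ⟨⟨ha1, ?_⟩, ?_⟩
    · calc a ≤ a * b := Nat.le_mul_of_pos_right a (by omega)
      _ = m := hab
      _ ≤ n := hmn
    · have hab' : b * a ≤ n := by rw [mul_comm]; omega
      have hble : b ≤ n / a := (Nat.le_div_iff_mul_le (show 0 < a by omega)).2 hab'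
      omega
  · rintro ⟨i, k⟩ hp
    simp
  · rintro ⟨m, a, b⟩ hp
    simp only [Finset.mem_sigma, mem_Icc, Nat.mem_divisorsAntidiagonal] at hp
    obtain ⟨⟨hm1, hmn⟩, hab, hm0⟩ := hp
    have hb1 : 1 ≤ b := by
      rcases Nat.eq_zero_or_pos b with rfl | h
      · simp at hab; omega
      · omega
    have hb : b - 1 + 1 = b := by omega
    simp only [hb, hab]
  · rintro ⟨i, k⟩ hp
    simp only [Finset.mem_sigma, mem_Icc, Finset.mem_range] at hp
    obtain ⟨⟨hi1, hin⟩, hk⟩ := hp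
    simp only
    have h1 : ((q : ℝ) ^ i)⁻¹ ^ (k + 1) = ((q : ℝ) ^ (i * (k + 1)))⁻¹ := by
      rw [inv_pow, ← pow_mul]
    rw [h1]
    have e1 : ((i * N i : ℕ) : ℝ) = (i : ℝ) * N i := by push_cast; ring
    have e2 : ((i * (k + 1) : ℕ) : ℝ) = (i : ℝ) * ((k : ℝ) + 1) := by push_cast; ring
    rw [e1, e2]
    have h2 : (0:ℝ) < (q:ℝ) ^ (i * (k + 1)) := by positivity
    have h3 : (0:ℝ) < (k:ℝ) + 1 := by positivity
    have h4 : (0:ℝ) < (i:ℝ) := by exact_mod_cast Nat.pos_of_ne_zero (by omega)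
    field_simp

theorem stmt_6 (q n : ℕ) (hq : IsPrimePow q) (hn : 1 ≤ n)
    (F : Type*) [Field F] [Fintype F] (hF : Fintype.card F = q) :
    (1 - 1 / (2 * ((q : ℝ) - 1) * (q : ℝ) ^ (n / 2))) * (∑ i ∈ Icc 1 n, (1 : ℝ) / i) ≤
        |∑ i ∈ Icc 1 n, (numIrred F i : ℝ) * Real.log (1 - 1 / (q : ℝ) ^ i)| ∧
      |∑ i ∈ Icc 1 n, (numIrred F i : ℝ) * Real.log (1 - 1 / (q : ℝ) ^ i)| ≤
        (1 + 1 / (2 * ((q : ℝ) - 1) * (q : ℝ) ^ (n / 2))) * ∑ i ∈ Icc 1 n, (1 : ℝ) / i := by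
  classical
  have hq2 : 2 ≤ q := hq.two_le
  have hQ1 : (1 : ℝ) < (q : ℝ) := by exact_mod_cast hq2
  have hQ0 : (0 : ℝ) < (q : ℝ) := by linarith
  set N : ℕ → ℕ := numIrred F with hN
  have hg : ∀ m, 1 ≤ m → ∑ d ∈ m.divisors, d * N d = q ^ m := by
    intro m hm
    rw [hN, ← hF]
    exact gauss_count F hm
  have hNle : ∀ d, 1 ≤ d → d * N d ≤ q ^ d := by
    intro d hd
    rw [← hg d hd]
    exact Finset.single_le_sum (f := fun i => i * N i) (fun i _ => Nat.zero_le _)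
      (Nat.mem_divisors_self d (by omega))
  set H : ℝ := ∑ i ∈ Icc 1 n, (1 : ℝ) / i with hH
  have hH0 : 0 ≤ H := Finset.sum_nonneg fun i _ => by positivity
  set ε : ℝ := 1 / (2 * ((q : ℝ) - 1) * (q : ℝ) ^ (n / 2)) with hεdef
  have hε0 : 0 < ε := by
    have : (0:ℝ) < (q:ℝ) - 1 := by linarith
    rw [hεdef]; positivity
  -- tail function
  set τ : ℕ → ℝ := fun i => -Real.log (1 - 1 / (q : ℝ) ^ i)
      - ∑ k ∈ range (n / i), (((q : ℝ) ^ i)⁻¹) ^ (k + 1) / ((k : ℝ) + 1) with hτdef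
  -- per-index facts
  have per : ∀ i ∈ Icc 1 n, 0 ≤ τ i ∧ (N i : ℝ) * τ i ≤ ε * (1 / (i : ℝ)) := by
    intro i hi
    rw [mem_Icc] at hi
    obtain ⟨hi1, hin⟩ := hi
    set x : ℝ := ((q : ℝ) ^ i)⁻¹ with hx
    have hQi1 : (1 : ℝ) < (q : ℝ) ^ i := one_lt_pow₀ hQ1 (by omega)
    have hx0 : 0 < x := by rw [hx]; positivity
    have hx1 : x < 1 := inv_lt_one_of_one_lt₀ hQi1
    have hlog : (1 : ℝ) - 1 / (q : ℝ) ^ i = 1 - x := by rw [hx, one_div]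
    have hs : HasSum (fun k : ℕ => x ^ (k + 1) / ((k : ℝ) + 1)) (-Real.log (1 - x)) :=
      Real.hasSum_pow_div_log_of_abs_lt_one (by rwa [abs_of_pos hx0])
    set K : ℕ := n / i with hK
    have hK1 : 1 ≤ K := (Nat.one_le_div_iff (by omega)).2 hin
    have hsplit : ∑ k ∈ range K, x ^ (k + 1) / ((k : ℝ) + 1)
        + ∑' k : ℕ, x ^ (k + K + 1) / (((k + K : ℕ) : ℝ) + 1) = -Real.log (1 - x) := by
      have h := Summable.sum_add_tsum_nat_add (f := fun k : ℕ => x ^ (k + 1) / ((k : ℝ) + 1)) K hs.summable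
      rw [hs.tsum_eq] at h
      exact h
    have hτeq : τ i = ∑' k : ℕ, x ^ (k + K + 1) / (((k + K : ℕ) : ℝ) + 1) := by
      rw [hτdef]
      simp only [hlog]
      rw [← hsplit]
      ring
    have htail0 : 0 ≤ τ i := by
      rw [hτeq]
      exact tsum_nonneg fun k => by positivity
    refine ⟨htail0, ?_⟩
    -- tail bound
    have hgs : Summable (fun k : ℕ => x ^ (K + 1) / ((K : ℝ) + 1) * x ^ k) :=
      (summable_geometric_of_lt_one hx0.le hx1).mul_left _
    have hτle : τ i ≤ x ^ (K + 1) / ((K : ℝ) + 1) * (1 - x)⁻¹ := by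
      rw [hτeq]
      have hsum2 : Summable (fun k : ℕ => x ^ (k + K + 1) / (((k + K : ℕ) : ℝ) + 1)) :=
        (summable_nat_add_iff (f := fun k : ℕ => x ^ (k + 1) / ((k : ℝ) + 1)) K).2 hs.summable
      have hle : ∀ k : ℕ, x ^ (k + K + 1) / (((k + K : ℕ) : ℝ) + 1)
          ≤ x ^ (K + 1) / ((K : ℝ) + 1) * x ^ k := by
        intro k
        have e1 : x ^ (k + K + 1) = x ^ (K + 1) * x ^ k := by
          rw [← pow_add]; congr 1; omega
        have e2 : x ^ (k + K + 1) / (((k + K : ℕ) : ℝ) + 1) ≤ x ^ (k + K + 1) / ((K : ℝ) + 1) := by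
          apply div_le_div_of_nonneg_left (by positivity) (by positivity)
          push_cast; linarith [Nat.cast_nonneg (α := ℝ) k]
        calc x ^ (k + K + 1) / (((k + K : ℕ) : ℝ) + 1) ≤ x ^ (k + K + 1) / ((K : ℝ) + 1) := e2
          _ = x ^ (K + 1) / ((K : ℝ) + 1) * x ^ k := by rw [e1]; ring
      calc ∑' k : ℕ, x ^ (k + K + 1) / (((k + K : ℕ) : ℝ) + 1)
          ≤ ∑' k : ℕ, x ^ (K + 1) / ((K : ℝ) + 1) * x ^ k := Summable.tsum_le_tsum hle hsum2 hgs
        _ = x ^ (K + 1) / ((K : ℝ) + 1) * (1 - x)⁻¹ := by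
            rw [tsum_mul_left, tsum_geometric_of_lt_one hx0.le hx1]
    have hxe : x ^ (K + 1) = (((q : ℝ)) ^ (i * (K + 1)))⁻¹ := by
      rw [hx, inv_pow, ← pow_mul]
    have hNcast : (i : ℝ) * (N i : ℝ) ≤ (q : ℝ) ^ i := by
      have := hNle i hi1
      calc (i : ℝ) * (N i : ℝ) = ((i * N i : ℕ) : ℝ) := by push_cast; ring
        _ ≤ ((q ^ i : ℕ) : ℝ) := by exact_mod_cast this
        _ = (q : ℝ) ^ i := by push_cast; ring
    have := tail_bound_real hQ1 hi1 hK1 (rfl : i * (K + 1) = i * (K + 1))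
      (nat_key_ineq hi1 hin) (Nat.cast_nonneg _) hNcast htail0
      (by rw [← hxe, ← hx]; exact hτle)
    calc (N i : ℝ) * τ i ≤ 1 / (2 * ((q:ℝ) - 1) * (q:ℝ) ^ (n / 2)) * (1 / (i : ℝ)) := this
      _ = ε * (1 / (i : ℝ)) := by rw [hεdef]
  -- main decomposition
  have hmain : ∑ i ∈ Icc 1 n, (N i : ℝ) * ∑ k ∈ range (n / i),
      (((q : ℝ) ^ i)⁻¹) ^ (k + 1) / ((k : ℝ) + 1) = H :=
    main_reindex q n hq2 hn N hg
  have hdecomp : ∑ i ∈ Icc 1 n, (N i : ℝ) * (-Real.log (1 - 1 / (q : ℝ) ^ i))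
      = H + ∑ i ∈ Icc 1 n, (N i : ℝ) * τ i := by
    rw [← hmain, ← Finset.sum_add_distrib]
    refine Finset.sum_congr rfl fun i _ => ?_
    rw [hτdef]
    ring
  have htail0 : 0 ≤ ∑ i ∈ Icc 1 n, (N i : ℝ) * τ i :=
    Finset.sum_nonneg fun i hi => mul_nonneg (Nat.cast_nonneg _) (per i hi).1
  have htailup : ∑ i ∈ Icc 1 n, (N i : ℝ) * τ i ≤ ε * H := by
    rw [hH, Finset.mul_sum]
    exact Finset.sum_le_sum fun i hi => (per i hi).2
  have habs : |∑ i ∈ Icc 1 n, (N i : ℝ) * Real.log (1 - 1 / (q : ℝ) ^ i)|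
      = ∑ i ∈ Icc 1 n, (N i : ℝ) * (-Real.log (1 - 1 / (q : ℝ) ^ i)) := by
    have e1 : ∑ i ∈ Icc 1 n, (N i : ℝ) * Real.log (1 - 1 / (q : ℝ) ^ i)
        = -(∑ i ∈ Icc 1 n, (N i : ℝ) * (-Real.log (1 - 1 / (q : ℝ) ^ i))) := by
      rw [← Finset.sum_neg_distrib]
      exact Finset.sum_congr rfl fun i _ => by ring
    rw [e1, abs_neg, abs_of_nonneg (by rw [hdecomp]; linarith)]
  constructor
  · rw [habs, hdecomp]
    nlinarith [mul_nonneg hε0.le hH0]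
  · rw [habs, hdecomp]
    nlinarith
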